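/- Let F be a field of characteristic zero. Then there exist a nonprincipal ultrafilter U on the set of prime numbers, a family (K_p)_p of fields with each K_p algebraically closed of characteristic p, and an injective ring homomorphism from F into the ultraproduct (∏_p K_p)/I_U. -/

import Mathlib

def ultraIdeal {ι : Type*} (R : ι → Type*) [∀ i, CommRing (R i)] (U : Ultrafilter ι) :
    Ideal (∀ i, R i) where
  carrier := {f | {i | f i = 0} ∈ U}
  zero_mem' := Filter.univ_mem' (fun i => rfl)
  add_mem' := by
    intro f g hf hg
    refine U.toFilter.mem_of_superset (Filter.inter_mem hf hg) ?_
    rintro i ⟨hfi, hgi⟩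
    simp only [Set.mem_setOf_eq] at *
    rw [Pi.add_apply, hfi, hgi, add_zero]
  smul_mem' := by
    intro c f hf
    refine U.toFilter.mem_of_superset hf ?_
    intro i hfi
    simp only [Set.mem_setOf_eq] at *
    rw [smul_eq_mul, Pi.mul_apply, hfi, mul_zero]

section UltraField

variable {ι : Type*} (R : ι → Type*) [∀ i, Field (R i)] (U : Ultrafilter ι)

theorem ultra_mem_iff (f : ∀ i, R i) : f ∈ ultraIdeal R U ↔ {i | f i = 0} ∈ U := Iff.rfl

theorem ultra_mk_eq_zero (f : ∀ i, R i) :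
    Ideal.Quotient.mk (ultraIdeal R U) f = 0 ↔ {i | f i = 0} ∈ U := by
  rw [Ideal.Quotient.eq_zero_iff_mem]; rfl

theorem ultra_isField : IsField ((∀ i, R i) ⧸ ultraIdeal R U) := by
  refine ⟨⟨0, 1, ?_⟩, mul_comm, ?_⟩
  · intro h
    have h1 : Ideal.Quotient.mk (ultraIdeal R U) 1 = 0 := by
      rw [map_one, ← h]
    rw [ultra_mk_eq_zero] at h1
    have he : {i | (1 : (∀ i, R i)) i = 0} = (∅ : Set ι) := by
      ext i; simp
    rw [he] at h1
    exact (Filter.empty_notMem (U : Filter ι)) h1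
  · intro a ha
    obtain ⟨f, rfl⟩ := Ideal.Quotient.mk_surjective a
    rw [Ne, ultra_mk_eq_zero] at ha
    refine ⟨Ideal.Quotient.mk _ (fun i => (f i)⁻¹), ?_⟩
    rw [← map_mul, ← map_one (Ideal.Quotient.mk (ultraIdeal R U)), Ideal.Quotient.eq]
    rw [ultra_mem_iff]
    refine Filter.mem_of_superset ((Ultrafilter.compl_mem_iff_notMem).2 ha) ?_
    intro i hi
    simp only [Set.mem_compl_iff, Set.mem_setOf_eq] at hi ⊢
    rw [Pi.sub_apply, Pi.mul_apply, Pi.one_apply, mul_inv_cancel₀ hi, sub_self]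

noncomputable def ultraField : Field ((∀ i, R i) ⧸ ultraIdeal R U) :=
  (ultra_isField R U).toField

theorem ultra_isAlgClosed [∀ i, IsAlgClosed (R i)] :
    letI := ultraField R U
    IsAlgClosed ((∀ i, R i) ⧸ ultraIdeal R U) := by
  letI := ultraField R U
  apply IsAlgClosed.of_exists_root
  intro q hq hirr
  set π := Ideal.Quotient.mk (ultraIdeal R U) with hπ
  have hn : 0 < q.natDegree := hirr.natDegree_pos
  -- lift the coefficients
  choose f hf using fun j => Ideal.Quotient.mk_surjective (I := ultraIdeal R U) (q.coeff j)
  set n := q.natDegree with hndef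
  set Q : Polynomial (∀ i, R i) :=
    Polynomial.X ^ n + ∑ j ∈ Finset.range n, Polynomial.C (f j) * Polynomial.X ^ j with hQ
  have hmapQ : Q.map π = q := by
    conv_rhs => rw [hq.as_sum]
    simp only [hQ, Polynomial.map_add, Polynomial.map_pow, Polynomial.map_X,
      Polynomial.map_sum, Polynomial.map_mul, Polynomial.map_C, hπ, hf]
    rfl
  -- the good set where the degree is correct
  have hcoeffn : π (Q.coeff n) = 1 := by
    have : (Q.map π).coeff n = q.coeff n := by rw [hmapQ]; rfl
    rw [Polynomial.coeff_map] at this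
    rw [this]; exact hq.coeff_natDegree
  have hA : {i | Q.coeff n i = 0} ∉ U := by
    intro h
    have : π (Q.coeff n) = 0 := (ultra_mk_eq_zero R U _).2 h
    rw [hcoeffn] at this
    exact one_ne_zero this
  -- pick roots componentwise
  classical
  set r : ∀ i, R i := fun i =>
    if h : (Q.map (Pi.evalRingHom R i)).degree ≠ 0 then
      (IsAlgClosed.exists_root _ h).choose else 0 with hr
  refine ⟨π r, ?_⟩
  have key : {i | Polynomial.eval r Q i = 0} ∈ U := by
    refine Filter.mem_of_superset ((Ultrafilter.compl_mem_iff_notMem).2 hA) ?_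
    intro i hi
    simp only [Set.mem_compl_iff, Set.mem_setOf_eq] at hi ⊢
    have hcoef : (Q.map (Pi.evalRingHom R i)).coeff n ≠ 0 := by
      rw [Polynomial.coeff_map]; exact hi
    have hdeg : (Q.map (Pi.evalRingHom R i)).degree ≠ 0 := by
      intro h0
      have hle := Polynomial.le_degree_of_ne_zero hcoef
      rw [h0] at hle
      have : n ≤ 0 := by exact_mod_cast hle
      omega
    have hroot := (IsAlgClosed.exists_root _ hdeg).choose_spec
    have h1 : Polynomial.eval r Q i = (Q.map (Pi.evalRingHom R i)).eval (r i) := by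
      rw [Polynomial.eval_map]
      exact (Polynomial.eval₂_at_apply (Pi.evalRingHom R i) r).symm
    have h2 : r i = (IsAlgClosed.exists_root _ hdeg).choose := by
      rw [hr]; exact dif_pos hdeg
    rw [h1, h2]
    exact hroot
  have : Polynomial.eval (π r) q = π (Polynomial.eval r Q) := by
    rw [← hmapQ]
    exact (Polynomial.eval_map π (π r)).trans (Polynomial.eval₂_at_apply π r)
  show Polynomial.eval (π r) q = 0
  rw [this, ultra_mk_eq_zero]
  exact key

end UltraField


section Construction

noncomputable section

/-- The field `K_p`: algebraic closure of a rational function field in many variables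
over `ZMod p`. -/
def UK (Om : Type) (p : Nat.Primes) : Type :=
  letI := Fact.mk p.2
  AlgebraicClosure (FractionRing (MvPolynomial Om (ZMod p)))

instance UK.field (Om : Type) (p : Nat.Primes) : Field (UK Om p) :=
  letI := Fact.mk p.2
  inferInstanceAs (Field (AlgebraicClosure (FractionRing (MvPolynomial Om (ZMod p)))))

instance UK.isAlgClosed (Om : Type) (p : Nat.Primes) : IsAlgClosed (UK Om p) :=
  letI := Fact.mk p.2
  inferInstanceAs (IsAlgClosed (AlgebraicClosure (FractionRing (MvPolynomial Om (ZMod p)))))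

instance UK.charP (Om : Type) (p : Nat.Primes) : CharP (UK Om p) p :=
  letI := Fact.mk p.2
  haveI : CharP (FractionRing (MvPolynomial Om (ZMod p))) p :=
    charP_of_injective_ringHom
      (IsFractionRing.injective (MvPolynomial Om (ZMod p))
        (FractionRing (MvPolynomial Om (ZMod p)))) p
  inferInstanceAs (CharP (AlgebraicClosure (FractionRing (MvPolynomial Om (ZMod p)))) p)

/-- The canonical ring map from integer polynomials into `K_p`. -/
def chi (Om : Type) (p : Nat.Primes) : MvPolynomial Om ℤ →+* UK Om p :=
  letI := Fact.mk p.2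
  RingHom.comp
    (RingHom.comp
      (algebraMap (FractionRing (MvPolynomial Om (ZMod p)))
        (AlgebraicClosure (FractionRing (MvPolynomial Om (ZMod p)))))
      (algebraMap (MvPolynomial Om (ZMod p)) (FractionRing (MvPolynomial Om (ZMod p)))))
    (MvPolynomial.map (Int.castRingHom (ZMod p)))

theorem chi_eq_zero {Om : Type} {p : Nat.Primes} {Q : MvPolynomial Om ℤ}
    (h : chi Om p Q = 0) : MvPolynomial.map (Int.castRingHom (ZMod p)) Q = 0 := by
  letI := Fact.mk p.2
  have h1 : Function.Injective (algebraMap (FractionRing (MvPolynomial Om (ZMod p)))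
      (AlgebraicClosure (FractionRing (MvPolynomial Om (ZMod p))))) :=
    RingHom.injective _
  have h2 : Function.Injective (algebraMap (MvPolynomial Om (ZMod p))
      (FractionRing (MvPolynomial Om (ZMod p)))) :=
    IsFractionRing.injective _ _
  have : (algebraMap (FractionRing (MvPolynomial Om (ZMod p)))
        (AlgebraicClosure (FractionRing (MvPolynomial Om (ZMod p)))))
      ((algebraMap (MvPolynomial Om (ZMod p)) (FractionRing (MvPolynomial Om (ZMod p))))
        (MvPolynomial.map (Int.castRingHom (ZMod p)) Q)) = 0 := h
  rw [← map_zero (algebraMap (FractionRing (MvPolynomial Om (ZMod p)))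
    (AlgebraicClosure (FractionRing (MvPolynomial Om (ZMod p)))))] at this
  have := h1 this
  rw [← map_zero (algebraMap (MvPolynomial Om (ZMod p))
    (FractionRing (MvPolynomial Om (ZMod p))))] at this
  exact h2 this

/-- Abstract form: a family of ring maps from an integer polynomial ring whose
kernels are "small" gives algebraically independent elements in the ultraproduct. -/
theorem ultra_algIndep_general {ι : Type*} (R : ι → Type*) [∀ i, Field (R i)]
    (U : Ultrafilter ι) {Om : Type*} (χ : ∀ i, MvPolynomial Om ℤ →+* R i)
    (h : ∀ Q : MvPolynomial Om ℤ, Q ≠ 0 → {i | χ i Q = 0} ∉ U) :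
    AlgebraicIndependent ℤ (fun a : Om =>
      Ideal.Quotient.mk (ultraIdeal R U) (fun i => χ i (MvPolynomial.X a))) := by
  set π := Ideal.Quotient.mk (ultraIdeal R U) with hπ
  set w : Om → ((∀ i, R i) ⧸ ultraIdeal R U) :=
    fun a => π (fun i => χ i (MvPolynomial.X a)) with hw
  rw [algebraicIndependent_iff_injective_aeval]
  rw [injective_iff_map_eq_zero]
  intro Q hQ0
  have key : MvPolynomial.aeval w Q = π (fun i => χ i Q) := by
    have : (MvPolynomial.aeval w : MvPolynomial Om ℤ →ₐ[ℤ] _).toRingHom =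
        π.comp (Pi.ringHom (fun i => χ i)) := by
      apply MvPolynomial.ringHom_ext
      · intro r
        exact DFunLike.congr_fun (RingHom.ext_int
          ((MvPolynomial.aeval w : MvPolynomial Om ℤ →ₐ[ℤ] _).toRingHom.comp
            (MvPolynomial.C : ℤ →+* MvPolynomial Om ℤ))
          ((π.comp (Pi.ringHom (fun i => χ i))).comp
            (MvPolynomial.C : ℤ →+* MvPolynomial Om ℤ))) r
      · intro a
        simp only [RingHom.coe_comp, Function.comp_apply, MvPolynomial.aeval_X,
          AlgHom.toRingHom_eq_coe, RingHom.coe_coe]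
        rfl
    exact DFunLike.congr_fun this Q
  by_contra hne
  refine h Q hne ?_
  rw [key] at hQ0
  exact (ultra_mk_eq_zero _ _ _).1 hQ0

/-- The kernels of the maps `chi` are small. -/
theorem chi_ker_small (Om : Type) (U : Ultrafilter Nat.Primes)
    (hU : ∀ s : Set Nat.Primes, s.Finite → s ∉ U) :
    ∀ Q : MvPolynomial Om ℤ, Q ≠ 0 → {p | chi Om p Q = 0} ∉ U := by
  intro Q hne hS
  obtain ⟨m, hm⟩ := MvPolynomial.ne_zero_iff.1 hne
  set c := MvPolynomial.coeff m Q with hc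
  have hsub : {p : Nat.Primes | chi Om p Q = 0} ⊆
      {p : Nat.Primes | (p : ℕ) ∣ c.natAbs} := by
    intro p hp
    simp only [Set.mem_setOf_eq] at hp ⊢
    have h0 := chi_eq_zero hp
    have h1 : MvPolynomial.coeff m (MvPolynomial.map (Int.castRingHom (ZMod p)) Q) = 0 := by
      rw [h0]; simp
    rw [MvPolynomial.coeff_map] at h1
    have h2 : ((c : ℤ) : ZMod p) = 0 := h1
    rw [ZMod.intCast_zmod_eq_zero_iff_dvd] at h2
    exact Int.ofNat_dvd_right.1 (Int.dvd_natAbs.2 h2)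
  have hfin : ({p : Nat.Primes | (p : ℕ) ∣ c.natAbs} : Set Nat.Primes).Finite := by
    have hc0 : c.natAbs ≠ 0 := fun h => hm (Int.natAbs_eq_zero.1 h)
    have hsub2 : {p : Nat.Primes | (p : ℕ) ∣ c.natAbs} ⊆
        Subtype.val ⁻¹' (Set.Iic c.natAbs) := by
      intro p hp
      exact Nat.le_of_dvd (Nat.pos_of_ne_zero hc0) hp
    exact Set.Finite.subset ((Set.finite_Iic c.natAbs).preimage
      (Set.injOn_of_injective Nat.Primes.coe_nat_injective)) hsub2
  exact hU _ hfin (Filter.mem_of_superset hS hsub)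

/-- Embed a characteristic-zero field into an algebraically closed field containing
an algebraically independent family indexed by (at least) the field itself. -/
theorem embed_of_algIndep {Om L : Type} [Field Om] [CharZero Om] [Field L] [IsAlgClosed L]
    (w : Om → L) (hw : AlgebraicIndependent ℤ w) :
    ∃ η : Om →+* L, Function.Injective η := by
  obtain ⟨s, hs⟩ := exists_isTranscendenceBasis ℤ Om
  haveI halg : Algebra.IsAlgebraic (Algebra.adjoin ℤ (Set.range (Subtype.val : s → Om))) Om :=
    hs.isAlgebraic
  have hw' : AlgebraicIndependent ℤ (w ∘ (Subtype.val : s → Om)) :=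
    hw.comp _ Subtype.val_injective
  let e : MvPolynomial s ℤ ≃+* Algebra.adjoin ℤ (Set.range (Subtype.val : s → Om)) :=
    hs.1.aevalEquiv.toRingEquiv
  let ψ : (Algebra.adjoin ℤ (Set.range (Subtype.val : s → Om))) →+* L :=
    (((MvPolynomial.aeval (w ∘ (Subtype.val : s → Om)) :
        MvPolynomial s ℤ →ₐ[ℤ] L) : MvPolynomial s ℤ →+* L)).comp e.symm.toRingHom
  have hψ : Function.Injective ψ :=
    (algebraicIndependent_iff_injective_aeval.1 hw').comp e.symm.injective
  letI : Algebra (Algebra.adjoin ℤ (Set.range (Subtype.val : s → Om))) L := ψ.toAlgebra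
  haveI : Module.IsTorsionFree (Algebra.adjoin ℤ (Set.range (Subtype.val : s → Om))) L :=
    Module.isTorsionFree_iff_algebraMap_injective.2 hψ
  haveI : Module.IsTorsionFree (Algebra.adjoin ℤ (Set.range (Subtype.val : s → Om))) Om :=
    Module.isTorsionFree_iff_algebraMap_injective.2 Subtype.val_injective
  let lft := IsAlgClosed.lift (R := Algebra.adjoin ℤ (Set.range (Subtype.val : s → Om)))
    (S := Om) (M := L)
  exact ⟨lft.toRingHom, lft.toRingHom.injective⟩

end

end Construction

theorem stmt4 (F : Type) [Field F] [CharZero F] :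
    ∃ (U : Ultrafilter Nat.Primes) (K : Nat.Primes → Type) (instK : ∀ p, Field (K p)),
      (∀ s : Set Nat.Primes, s.Finite → s ∉ U) ∧
      (letI := instK;
        (∀ p : Nat.Primes, IsAlgClosed (K p) ∧ CharP (K p) p.1) ∧
        ∃ η : F →+* ((∀ p, K p) ⧸ ultraIdeal K U), Function.Injective η) := by
  classical
  refine ⟨Filter.hyperfilter Nat.Primes, UK (AlgebraicClosure F), fun p => UK.field _ p,
    fun s hs => Filter.notMem_hyperfilter_of_finite hs,
    fun p => ⟨UK.isAlgClosed _ p, UK.charP _ p⟩, ?_⟩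
  letI : Field ((∀ p, UK (AlgebraicClosure F) p) ⧸
      ultraIdeal (UK (AlgebraicClosure F)) (Filter.hyperfilter Nat.Primes)) :=
    ultraField _ _
  haveI : IsAlgClosed ((∀ p, UK (AlgebraicClosure F) p) ⧸
      ultraIdeal (UK (AlgebraicClosure F)) (Filter.hyperfilter Nat.Primes)) :=
    ultra_isAlgClosed (UK (AlgebraicClosure F)) (Filter.hyperfilter Nat.Primes)
  have hw := ultra_algIndep_general (UK (AlgebraicClosure F)) (Filter.hyperfilter Nat.Primes)
    (chi (AlgebraicClosure F))
    (chi_ker_small _ _ (fun s hs => Filter.notMem_hyperfilter_of_finite hs))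
  obtain ⟨η0, hη0⟩ := embed_of_algIndep _ hw
  exact ⟨η0.comp (algebraMap F (AlgebraicClosure F)),
    hη0.comp (algebraMap F (AlgebraicClosure F)).injective⟩
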